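/- arXiv:2107.02591 — 2 statements merged into one kernel-verified Lean document; each statement's English description precedes it below -/
import Mathlib

section
/- Bounded origin distance implies bounded delay for synchronized word productions: let ℓ, i ≥ 1 and let u be a word of length n, v a word of length m, and o1, o2 : {1,…,m} → {1,…,n} two monotone nondecreasing origin maps such that (a) for each input position p, at most ℓ output positions d satisfy o1(d) = p, and (b) |o1(d) − o2(d)| ≤ i for all d. Then for every input prefix length p ∈ {0,…,n}, the numbers k1 = |{d : o1(d) ≤ p}| and k2 = |{d : o2(d) ≤ p}| satisfy |k1 − k2| ≤ ℓ·i. -/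
private lemma cap_interval {ℓ n m : ℕ} (o1 : Fin m → Fin n)
    (hcap : ∀ p : Fin n, (Finset.univ.filter fun d : Fin m => o1 d = p).card ≤ ℓ)
    (a b : ℕ) :
    (Finset.univ.filter fun d : Fin m => a ≤ (o1 d : ℕ) ∧ (o1 d : ℕ) < a + b).card ≤ ℓ * b := by
  calc (Finset.univ.filter fun d : Fin m => a ≤ (o1 d : ℕ) ∧ (o1 d : ℕ) < a + b).card
      ≤ ((Finset.Ico a (a+b)).biUnion fun q =>
          Finset.univ.filter fun d : Fin m => (o1 d : ℕ) = q).card := by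
        apply Finset.card_le_card
        intro d hd
        simp only [Finset.mem_filter, Finset.mem_biUnion, Finset.mem_Ico,
          Finset.mem_univ, true_and] at *
        exact ⟨(o1 d : ℕ), ⟨hd.1, hd.2⟩, rfl⟩
    _ ≤ ∑ q ∈ Finset.Ico a (a+b),
          (Finset.univ.filter fun d : Fin m => (o1 d : ℕ) = q).card :=
        Finset.card_biUnion_le
    _ ≤ ∑ _q ∈ Finset.Ico a (a+b), ℓ := by
        apply Finset.sum_le_sum
        intro q _
        by_cases hq : q < n
        · refine le_trans (le_of_eq ?_) (hcap ⟨q, hq⟩)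
          congr 1; ext d; simp [Fin.ext_iff]
        · have : (Finset.univ.filter fun d : Fin m => (o1 d : ℕ) = q) = ∅ := by
            rw [Finset.filter_eq_empty_iff]
            intro d _ h
            exact hq (h ▸ (o1 d).isLt)
          simp [this]
    _ = ℓ * b := by
        rw [Finset.sum_const, Nat.card_Ico, smul_eq_mul, Nat.add_sub_cancel_left, mul_comm]

/-- Bounded origin distance implies bounded delay for synchronized word productions:
given monotone origin maps `o1 o2 : {1,…,m} → {1,…,n}` (0-indexed here: `Fin m → Fin n`)
such that at most `ℓ` output positions have the same `o1`-origin and `|o1 d − o2 d| ≤ i`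
for all `d`, then for every input prefix length `p ≤ n` the amounts `k1`, `k2` of output
produced on that prefix in the two runs satisfy `|k1 − k2| ≤ ℓ·i`. -/
theorem bounded_origin_distance_implies_bounded_delay
    (ℓ i n m : ℕ) (hℓ : 1 ≤ ℓ) (hi : 1 ≤ i)
    (o1 o2 : Fin m → Fin n)
    (hmono1 : Monotone o1) (hmono2 : Monotone o2)
    (hcap : ∀ p : Fin n, (Finset.univ.filter fun d : Fin m => o1 d = p).card ≤ ℓ)
    (hclose : ∀ d : Fin m, |((o1 d : ℕ) : ℤ) - ((o2 d : ℕ) : ℤ)| ≤ (i : ℤ))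
    (p : ℕ) (hp : p ≤ n) :
    |(((Finset.univ.filter fun d : Fin m => (o1 d : ℕ) < p).card : ℤ) -
      ((Finset.univ.filter fun d : Fin m => (o2 d : ℕ) < p).card : ℤ))| ≤ (ℓ * i : ℤ) := by
  set S1 := Finset.univ.filter fun d : Fin m => (o1 d : ℕ) < p with hS1
  set S2 := Finset.univ.filter fun d : Fin m => (o2 d : ℕ) < p with hS2
  -- S2 \ S1 lies in the window [p, p+i) of o1
  have h21 : S2 \ S1 ⊆
      Finset.univ.filter fun d : Fin m => p ≤ (o1 d : ℕ) ∧ (o1 d : ℕ) < p + i := by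
    intro d hd
    simp only [hS1, hS2, Finset.mem_sdiff, Finset.mem_filter, Finset.mem_univ,
      true_and, not_lt] at hd ⊢
    have := abs_le.mp (hclose d)
    omega
  -- S1 \ S2 lies in the window [p-i, p) ⊆ [p-i, (p-i)+i) of o1
  have h12 : S1 \ S2 ⊆
      Finset.univ.filter fun d : Fin m => p - i ≤ (o1 d : ℕ) ∧ (o1 d : ℕ) < (p - i) + i := by
    intro d hd
    simp only [hS1, hS2, Finset.mem_sdiff, Finset.mem_filter, Finset.mem_univ,
      true_and, not_lt] at hd ⊢
    have := abs_le.mp (hclose d)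
    omega
  have c21 : (S2 \ S1).card ≤ ℓ * i :=
    le_trans (Finset.card_le_card h21) (cap_interval o1 hcap p i)
  have c12 : (S1 \ S2).card ≤ ℓ * i :=
    le_trans (Finset.card_le_card h12) (cap_interval o1 hcap (p - i) i)
  have b1 : S1.card ≤ (S1 \ S2).card + S2.card := Finset.card_le_card_sdiff_add_card
  have b2 : S2.card ≤ (S2 \ S1).card + S1.card := Finset.card_le_card_sdiff_add_card
  rw [abs_le]
  constructor <;> push_cast <;> omega
end

section
/- Runs of linear top-down tree transducers have length bounded by the input size: if T is a linear TDTT and (t, q0, φ0) →^n (t, t', φ) is any run of T on input tree t, then n ≤ |dom(t)|; moreover, along such a run, every node of t is the φ-image of at most one Q-labeled leaf in each configuration. -/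
/-- A partial tree over a ranked alphabet `S`, represented by its (partial) labeling
function: `t u = some a` means node `u` is in the domain and labeled `a`. -/
abbrev PTree (S : Type) := List ℕ → Option S

/-- The (tree) domain of a partial tree. -/
def treeDom {S : Type} (t : PTree S) : Set (List ℕ) := {u | t u ≠ none}

/-- `t` is a partial tree over the ranked alphabet `(S, rk)`: its domain is a finite
nonempty prefix-closed left-closed set of words over `ℕ \ {0}`, and every node has
at most `rk (label)` successors. -/
structure IsPTree {S : Type} (rk : S → ℕ) (t : PTree S) : Prop where
  finite : (treeDom t).Finite
  root : t [] ≠ none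
  pos : ∀ u ∈ treeDom t, ∀ i ∈ u, 0 < i
  prefixClosed : ∀ u v : List ℕ, u <+: v → v ∈ treeDom t → u ∈ treeDom t
  leftClosed : ∀ (u : List ℕ) (i j : ℕ), u ++ [i] ∈ treeDom t → 1 ≤ j → j < i →
    u ++ [j] ∈ treeDom t
  rankBound : ∀ (u : List ℕ) (a : S), t u = some a → ∀ i : ℕ, u ++ [i] ∈ treeDom t → i ≤ rk a

/-- The prefix relation `t' ⊑ t` on partial trees: `dom t' ⊆ dom t` and the labels
agree on `dom t'`. -/
def ple {S : Type} (t' t : PTree S) : Prop := ∀ (u : List ℕ) (a : S), t' u = some a → t u = some a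

/-- A top-down tree transducer `T = (Q, Σ, Γ, q0, Δ)`.  A rule for state `q` and input
symbol `f` has as right-hand side a tree over `Γ ∪ (Q × ℕ)`, where a leaf `(q', j)`
stands for `q'(x_j)` (state `q'` sent to the `j`-th child of the current input node). -/
structure TDTT (Q S Γ : Type) where
  q0 : Q
  rules : Q → S → Set (PTree (Γ ⊕ (Q × ℕ)))

/-- A configuration of a top-down tree transducer on a fixed input tree: an output tree
over `Γ ∪ Q` together with a map `φ` sending each `Q`-labeled leaf of the output tree to
the input node from which the transducer continues to read. -/
structure Config (Q Γ : Type) where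
  out : PTree (Γ ⊕ Q)
  φ : List ℕ → Option (List ℕ)

/-- The initial configuration `(t, q0, φ0)` (output is the single state-labeled node
`q0`, mapped to the root of the input tree). -/
def initConfig {Q S Γ : Type} (T : TDTT Q S Γ) : Config Q Γ where
  out := fun w => if w = [] then some (Sum.inr T.q0) else none
  φ := fun w => if w = [] then some ([] : List ℕ) else none

/-- The successor relation on configurations: one rule of `T` is applied at a
state-labeled leaf `u` of the output tree, mapped by `φ` to input node `v`; the leaf is
replaced by the rule's right-hand side and `φ` sends the new state-labeled leaves
`(q', j)` to the corresponding children `v ++ [j]` of `v`. -/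
def Step {Q S Γ : Type} (T : TDTT Q S Γ) (t : PTree S) (c c' : Config Q Γ) : Prop :=
  ∃ (u v : List ℕ) (q : Q) (f : S) (rhs : PTree (Γ ⊕ (Q × ℕ))),
    c.out u = some (Sum.inr q) ∧ c.φ u = some v ∧ t v = some f ∧ rhs ∈ T.rules q f ∧
    (∀ w : List ℕ, c'.out w =
      if u <+: w then (rhs (w.drop u.length)).map (Sum.map id Prod.fst) else c.out w) ∧
    (∀ w : List ℕ, c'.φ w =
      if u <+: w then
        (match rhs (w.drop u.length) with
          | some (Sum.inr p) => some (v ++ [p.2])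
          | _ => none)
      else c.φ w)

/-- A configuration is final if it has no successor configuration. -/
def Final {Q S Γ : Type} (T : TDTT Q S Γ) (t : PTree S) (c : Config Q Γ) : Prop :=
  ¬ ∃ c' : Config Q Γ, Step T t c c'

/-- `T(t)`: the set of final transformed outputs of computations of `T` on `t`
(trees over `Γ ∪ Q`). -/
def outputs {Q S Γ : Type} (T : TDTT Q S Γ) (t : PTree S) : Set (PTree (Γ ⊕ Q)) :=
  {s | ∃ c : Config Q Γ, Relation.ReflTransGen (Step T t) (initConfig T) c ∧
    Final T t c ∧ c.out = s}

/-- `T` is linear: in every rule the variables `x_{j1}, …, x_{jn}` occurring on the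
right-hand side are pairwise distinct. -/
def Linear {Q S Γ : Type} (T : TDTT Q S Γ) : Prop :=
  ∀ (q : Q) (f : S) (rhs : PTree (Γ ⊕ (Q × ℕ))), rhs ∈ T.rules q f →
    ∀ (u1 u2 : List ℕ) (p1 p2 : Q × ℕ),
      rhs u1 = some (Sum.inr p1) → rhs u2 = some (Sum.inr p2) → p1.2 = p2.2 → u1 = u2

/-- Runs of linear top-down tree transducers have length bounded by the input size:
any run `(t, q0, φ0) →ⁿ (t, t', φ)` of a linear TDTT `T` on input `t` satisfies
`n ≤ |dom t|`; moreover, along such a run, every node of `t` is the `φ`-image of at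
most one `Q`-labeled leaf in each configuration. -/
theorem linear_run_length_bounded {Q S Γ : Type} (rkS : S → ℕ)
    (T : TDTT Q S Γ) (hlin : Linear T)
    (t : PTree S) (ht : IsPTree rkS t)
    (n : ℕ) (c : ℕ → Config Q Γ)
    (h0 : c 0 = initConfig T) (hstep : ∀ i, i < n → Step T t (c i) (c (i + 1))) :
    n ≤ (treeDom t).ncard ∧
    ∀ i, i ≤ n → ∀ (w1 w2 v : List ℕ) (q1 q2 : Q),
      (c i).out w1 = some (Sum.inr q1) → (c i).out w2 = some (Sum.inr q2) →
      (c i).φ w1 = some v → (c i).φ w2 = some v → w1 = w2 := by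
  -- auxiliary list fact: prefixes of `v ++ [j]`
  have concat_cases : ∀ (x v : List ℕ) (j : ℕ), x <+: v ++ [j] → x <+: v ∨ x = v ++ [j] := by
    intro x v j hx
    by_cases hlenx : x.length ≤ v.length
    · exact Or.inl (List.prefix_of_prefix_length_le hx (List.prefix_append v [j]) hlenx)
    · right
      refine hx.eq_of_length ?_
      have := hx.length_le
      simp only [List.length_append, List.length_singleton] at this ⊢
      omega
  -- main invariant, by induction on the step index
  have key : ∀ i, i ≤ n →
      ((∀ w1 w2 x1 x2 q1 q2, (c i).out w1 = some (Sum.inr q1) →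
        (c i).out w2 = some (Sum.inr q2) →
        (c i).φ w1 = some x1 → (c i).φ w2 = some x2 → w1 ≠ w2 → ¬ x1 <+: x2) ∧
      ∃ g : ℕ → List ℕ,
        (∀ k, k < i → g k ∈ treeDom t) ∧
        Set.InjOn g (Set.Iio i) ∧
        (∀ k, k < i → ∀ w x q, (c i).out w = some (Sum.inr q) →
          (c i).φ w = some x → ¬ x <+: g k)) := by
    intro i
    induction i with
    | zero =>
      intro _
      constructor
      · intro w1 w2 x1 x2 q1 q2 h1 h2 _ _ hne _
        rw [h0] at h1 h2
        simp only [initConfig] at h1 h2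
        split_ifs at h1 h2 with e1 e2
        exact hne (e1.trans e2.symm)
      · exact ⟨fun _ => [], fun k hk => absurd hk (Nat.not_lt_zero k),
          fun a ha => absurd ha (by simp), fun k hk => absurd hk (Nat.not_lt_zero k)⟩
    | succ i ih =>
      intro hsn
      have hi : i < n := hsn
      obtain ⟨inj, g, hgdom, hginj, hgfresh⟩ := ih (le_of_lt hi)
      obtain ⟨u, v, q, f, rhs, hu, hφu, htv, hrhs, hout, hφ⟩ := hstep i hi
      -- characterize the "active pairs" of configuration i+1
      have char : ∀ w x q', (c (i+1)).out w = some (Sum.inr q') → (c (i+1)).φ w = some x →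
          (∃ d p, w = u ++ d ∧ rhs d = some (Sum.inr p) ∧ x = v ++ [p.2]) ∨
          (¬ u <+: w ∧ ∃ q'', (c i).out w = some (Sum.inr q'') ∧ (c i).φ w = some x) := by
        intro w x q' ho hp
        rw [hout w] at ho
        rw [hφ w] at hp
        by_cases hpre : u <+: w
        · rw [if_pos hpre] at ho hp
          left
          obtain ⟨d, rfl⟩ := hpre
          rw [List.drop_left] at ho hp
          match hr : rhs d with
          | none => rw [hr] at hp; simp at hp
          | some (Sum.inl a) => rw [hr] at hp; simp at hp
          | some (Sum.inr p) =>
            rw [hr] at hp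
            simp only [Option.some.injEq] at hp
            exact ⟨d, p, rfl, hr, hp.symm⟩
        · rw [if_neg hpre] at ho hp
          exact Or.inr ⟨hpre, q', ho, hp⟩
      constructor
      · -- pairwise incomparability of φ-images at step i+1
        intro w1 w2 x1 x2 q1 q2 ho1 ho2 hp1 hp2 hne hle
        rcases char w1 x1 q1 ho1 hp1 with ⟨d1, p1, he1, hr1, hx1⟩ | ⟨hnp1, q1', ho1', hp1'⟩
        · rcases char w2 x2 q2 ho2 hp2 with ⟨d2, p2, he2, hr2, hx2⟩ | ⟨hnp2, q2', ho2', hp2'⟩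
          · -- both new
            subst hx1; subst hx2
            have heq : v ++ [p1.2] = v ++ [p2.2] := hle.eq_of_length (by simp)
            have hj : p1.2 = p2.2 := by
              have := List.append_cancel_left heq
              simpa using this
            have hd := hlin q f rhs hrhs d1 d2 p1 p2 hr1 hr2 hj
            exact hne (by rw [he1, he2, hd])
          · -- w1 new, w2 old
            subst hx1
            have hw2u : u ≠ w2 := fun h => hnp2 (h ▸ List.prefix_rfl)
            have hvx2 : v <+: x2 := (List.prefix_append v [p1.2]).trans hle
            exact inj u w2 v x2 q q2' hu ho2' hφu hp2' hw2u hvx2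
        · rcases char w2 x2 q2 ho2 hp2 with ⟨d2, p2, he2, hr2, hx2⟩ | ⟨hnp2, q2', ho2', hp2'⟩
          · -- w1 old, w2 new
            subst hx2
            have hw1u : w1 ≠ u := fun h => hnp1 (h ▸ List.prefix_rfl)
            rcases concat_cases x1 v p2.2 hle with hcase | hcase
            · exact inj w1 u x1 v q1' q ho1' hu hp1' hφu hw1u hcase
            · have : v <+: x1 := hcase ▸ List.prefix_append v [p2.2]
              exact inj u w1 v x1 q q1' hu ho1' hφu hp1' (Ne.symm hw1u) this
          · -- both old
            exact inj w1 w2 x1 x2 q1' q2' ho1' ho2' hp1' hp2' hne hle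
      · -- the extended sequence of consumed input nodes
        refine ⟨fun k => if k = i then v else g k, ?_, ?_, ?_⟩
        · intro k hk
          by_cases hki : k = i
          · simp only [if_pos hki]
            intro hnone
            rw [htv] at hnone; exact Option.some_ne_none f hnone
          · simp only [if_neg hki]
            exact hgdom k (by omega)
        · intro a ha b hb hab
          simp only [Set.mem_Iio] at ha hb
          by_cases hai : a = i <;> by_cases hbi : b = i
          · omega
          · simp only [if_pos hai, if_neg hbi] at hab
            exact absurd List.prefix_rfl
              (hab ▸ hgfresh b (by omega) u v q hu hφu)
          · simp only [if_neg hai, if_pos hbi] at hab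
            exact absurd List.prefix_rfl
              (hab.symm ▸ hgfresh a (by omega) u v q hu hφu)
          · simp only [if_neg hai, if_neg hbi] at hab
            exact hginj (Set.mem_Iio.2 (by omega)) (Set.mem_Iio.2 (by omega)) hab
        · intro k hk w x q' ho hp
          rcases char w x q' ho hp with ⟨d, p, he, hr, hx⟩ | ⟨hnp, q'', ho', hp'⟩
          · subst hx
            by_cases hki : k = i
            · simp only [if_pos hki]
              intro habs
              have := habs.length_le
              simp at this
            · simp only [if_neg hki]
              intro habs
              have : v <+: g k := (List.prefix_append v [p.2]).trans habs
              exact hgfresh k (by omega) u v q hu hφu this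
          · by_cases hki : k = i
            · simp only [if_pos hki]
              have hwu : w ≠ u := fun h => hnp (h ▸ List.prefix_rfl)
              exact inj w u x v q'' q ho' hu hp' hφu hwu
            · simp only [if_neg hki]
              exact hgfresh k (by omega) w x q'' ho' hp'
  obtain ⟨_, g, hgdom, hginj, _⟩ := key n le_rfl
  constructor
  · -- length bound
    classical
    have hsub : ↑((Finset.range n).image g) ⊆ treeDom t := by
      intro x hx
      simp only [Finset.coe_image, Finset.coe_range, Set.mem_image, Set.mem_Iio] at hx
      obtain ⟨k, hk, rfl⟩ := hx
      exact hgdom k hk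
    have hcard : ((Finset.range n).image g).card = n := by
      rw [Finset.card_image_of_injOn (by rw [Finset.coe_range]; exact hginj),
        Finset.card_range]
    calc n = ((Finset.range n).image g).card := hcard.symm
      _ = (↑((Finset.range n).image g) : Set (List ℕ)).ncard :=
          (Set.ncard_coe_finset _).symm
      _ ≤ (treeDom t).ncard := Set.ncard_le_ncard hsub ht.finite
  · -- injectivity of φ on state-labeled nodes
    intro i hin w1 w2 v q1 q2 ho1 ho2 hp1 hp2
    by_contra hne
    exact (key i hin).1 w1 w2 v v q1 q2 ho1 ho2 hp1 hp2 hne List.prefix_rfl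
end
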